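/- If the dynamical system (Ω, T) satisfies the topological repetition property (TRP), i.e. PRP(T) is dense in Ω, then PRP(T) is a residual (comeager) subset of Ω. -/
import Mathlib


def PRPset {Ω : Type*} [PseudoMetricSpace Ω] (T : Ω → Ω) : Set Ω :=
  {ω | ∀ ε > (0 : ℝ), ∀ r : ℕ, 0 < r → ∃ q : ℕ, 0 < q ∧
    ∀ n ≤ r * q, dist (T^[n] ω) (T^[n + q] ω) < ε}

theorem trp_implies_residual {Ω : Type*} [MetricSpace Ω] [CompactSpace Ω] (T : Ω ≃ₜ Ω)
    (htrp : Dense (PRPset ⇑T)) :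
    PRPset ⇑T ∈ residual Ω := by
  set A : ℕ → ℕ → Set Ω := fun k r =>
    {ω | ∃ q : ℕ, 0 < q ∧ ∀ n ≤ (r + 1) * q,
      dist (T^[n] ω) (T^[n + q] ω) < 1 / (k + 1)} with hA
  have hsub : ∀ k r, PRPset ⇑T ⊆ A k r := by
    intro k r ω hω
    exact hω (1 / (k + 1)) (by positivity) (r + 1) (Nat.succ_pos r)
  have hopen : ∀ k r, IsOpen (A k r) := by
    intro k r
    have : A k r = ⋃ q ∈ {q : ℕ | 0 < q}, ⋂ n ∈ Finset.range ((r + 1) * q + 1),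
        {ω | dist (T^[n] ω) (T^[n + q] ω) < 1 / (k + 1)} := by
      ext ω
      simp [hA, Nat.lt_succ_iff]
    rw [this]
    refine isOpen_biUnion fun q _ => isOpen_biInter_finset fun n _ => ?_
    exact isOpen_lt (Continuous.dist (T.continuous.iterate n)
      (T.continuous.iterate (n + q))) continuous_const
  have heq : PRPset ⇑T = ⋂ k, ⋂ r, A k r := by
    apply Set.Subset.antisymm
    · exact Set.subset_iInter fun k => Set.subset_iInter fun r => hsub k r
    · intro ω hω
      simp only [Set.mem_iInter] at hω
      intro ε hε r hr
      obtain ⟨k, hk⟩ := exists_nat_one_div_lt hε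
      obtain ⟨q, hq, hq'⟩ := hω k (r - 1)
      refine ⟨q, hq, fun n hn => lt_trans (hq' n ?_) hk⟩
      rwa [Nat.sub_add_cancel hr]
  rw [heq]
  exact countable_iInter_mem.2 fun k => countable_iInter_mem.2 fun r =>
    residual_of_dense_open (hopen k r) (htrp.mono (hsub k r))
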